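/- Let d ≥ 1 be an integer, k ∈ {0,…,d−1}, z ≥ 1 a real number, and ε ∈ (0, 1/(2^{z+1}+2)]. Let (P,w) be a weighted set of n ≥ 1 points in ℝ^d, set ψ = (ε/z)^z, r = 1 + max_{q∈P} D_z(q, 0_d)/(ψ·ε²), c₀ = (εr)^{1/z} / √((εr)^{2/z} + r²), c₁ = 2^z + 1, and e_{d+1} = (0,…,0,1) ∈ ℝ^{d+1}. For q ∈ P let q' = (q | r). Let Q₁ be the set of nonempty affine k-subspaces S of ℝ^d with D_z(0_d, S) < ε·r, and let Q₁' be the set of (k+1)-dimensional linear subspaces S' of ℝ^{d+1} with dist(r·e_{d+1}, S') < c₀·r. Then for every p ∈ P, | sup_{S∈Q₁} w(p)·D_z(p,S)/Σ_{q∈P} w(q)·D_z(q,S) − sup_{S'∈Q₁'} w(p)·D_z(p',S')/Σ_{q∈P} w(q)·D_z(q',S') | ≤ 16·c₁·ε · sup_{S'∈Q₁'} w(p)·D_z(p',S')/Σ_{q∈P} w(q)·D_z(q',S'), where each supremum is taken over those subspaces for which the corresponding denominator is nonzero. -/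

import Mathlib

/-- `(q | r) ∈ ℝ^{d+1}`: the point `q ∈ ℝ^d` with the coordinate `r` appended. -/
noncomputable def lift {d : ℕ} (q : EuclideanSpace ℝ (Fin d)) (r : ℝ) :
    EuclideanSpace ℝ (Fin (d + 1)) :=
  WithLp.toLp 2 (Fin.snoc (α := fun _ => ℝ) (WithLp.ofLp q) r)

lemma sub_orthogonalProjection_mem_orthogonal {E : Type*} [NormedAddCommGroup E]
    [InnerProductSpace ℝ E] {W : Submodule ℝ E} [W.HasOrthogonalProjection] (v : E) :
    v - (W.orthogonalProjectionOnto v : E) ∈ Wᗮ :=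
  Submodule.sub_starProjection_mem_orthogonal v

namespace Stmt13

open Metric Real

variable {d : ℕ}

lemma lift_apply_castSucc (q : EuclideanSpace ℝ (Fin d)) (r : ℝ) (i : Fin d) :
    lift q r i.castSucc = q i := by simp [lift]

lemma lift_apply_last (q : EuclideanSpace ℝ (Fin d)) (r : ℝ) :
    lift q r (Fin.last d) = r := by simp [lift]

lemma lift_add (x y : EuclideanSpace ℝ (Fin d)) (s t : ℝ) :
    lift x s + lift y t = lift (x + y) (s + t) := by
  ext i
  induction i using Fin.lastCases with
  | last => simp [lift_apply_last]
  | cast i => simp [lift_apply_castSucc]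

lemma lift_sub (x y : EuclideanSpace ℝ (Fin d)) (s t : ℝ) :
    lift x s - lift y t = lift (x - y) (s - t) := by
  ext i
  induction i using Fin.lastCases with
  | last => simp [lift_apply_last]
  | cast i => simp [lift_apply_castSucc]

lemma lift_smul (c : ℝ) (x : EuclideanSpace ℝ (Fin d)) (s : ℝ) :
    c • lift x s = lift (c • x) (c * s) := by
  ext i
  induction i using Fin.lastCases with
  | last => simp [lift_apply_last]
  | cast i => simp [lift_apply_castSucc]

lemma eq_lift (x : EuclideanSpace ℝ (Fin (d + 1))) :
    x = lift (WithLp.toLp 2 (fun i => x i.castSucc)) (x (Fin.last d)) := by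
  ext i
  induction i using Fin.lastCases with
  | last => simp [lift_apply_last]
  | cast i => simp [lift_apply_castSucc]

lemma inner_lift (x y : EuclideanSpace ℝ (Fin d)) (s t : ℝ) :
    (inner ℝ (lift x s) (lift y t) : ℝ) = inner ℝ x y + s * t := by
  simp only [PiLp.inner_apply, RCLike.inner_apply, starRingEnd_apply, star_trivial]
  rw [Fin.sum_univ_castSucc]
  simp [lift_apply_castSucc, lift_apply_last]
  ring

lemma norm_lift_sq (x : EuclideanSpace ℝ (Fin d)) (s : ℝ) :
    ‖lift x s‖ ^ 2 = ‖x‖ ^ 2 + s ^ 2 := by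
  rw [← real_inner_self_eq_norm_sq, ← real_inner_self_eq_norm_sq, inner_lift]
  ring

/-- The linear embedding `x ↦ (x | 0)`. -/
noncomputable def liftL (d : ℕ) :
    EuclideanSpace ℝ (Fin d) →ₗ[ℝ] EuclideanSpace ℝ (Fin (d + 1)) where
  toFun x := lift x 0
  map_add' x y := by rw [lift_add, add_zero]
  map_smul' c x := by simp only [RingHom.id_apply]; rw [lift_smul, mul_zero]

lemma liftL_apply (x : EuclideanSpace ℝ (Fin d)) : liftL d x = lift x 0 := rfl

lemma liftL_injective : Function.Injective (liftL d) := by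
  intro x y h
  ext i
  have := congrArg (fun v => v i.castSucc) h
  simpa [liftL_apply, lift_apply_castSucc] using this

/-- lower bound on `infDist` from a pointwise bound. -/
lemma le_infDist_of_forall {α : Type*} [MetricSpace α] {x : α} {s : Set α}
    {b : ℝ} (hs : s.Nonempty) (h : ∀ y ∈ s, b ≤ dist x y) : b ≤ infDist x s := by
  by_contra hlt
  push_neg at hlt
  obtain ⟨y, hy, hd⟩ := (infDist_lt_iff hs).1 hlt
  have := h y hy
  linarith

end Stmt13


namespace Stmt13SC
open Real

lemma exp_le_inv_one_sub {t : ℝ} (h0 : 0 ≤ t) (h1 : t < 1) : Real.exp t ≤ 1 / (1 - t) := by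
  have hpos : 0 < 1 - t := by linarith
  rw [le_div_iff₀ hpos]
  have h2 : 1 - t ≤ Real.exp (-t) := by have := Real.add_one_le_exp (-t); linarith
  calc Real.exp t * (1 - t) ≤ Real.exp t * Real.exp (-t) :=
        mul_le_mul_of_nonneg_left h2 (Real.exp_pos t).le
    _ = 1 := by rw [← Real.exp_add]; simp

lemma one_add_rpow_le {x z ε : ℝ} (hx : 0 ≤ x) (hz : 1 ≤ z) (hε : 0 < ε) (hε2 : ε ≤ 1/2)
    (h : z * x ≤ ε) : (1 + x) ^ (z/2) ≤ 1/(1-ε) := by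
  have h1 : (1:ℝ) ≤ 1 + x := by linarith
  have h2 : (1+x)^(z/2) ≤ (1+x)^z := Real.rpow_le_rpow_of_exponent_le h1 (by linarith)
  have h3 : (1+x)^z ≤ (Real.exp x)^z :=
    Real.rpow_le_rpow (by linarith) (by linarith [Real.add_one_le_exp x]) (by linarith)
  rw [← Real.exp_mul] at h3
  have h4 : Real.exp (x*z) ≤ Real.exp ε := Real.exp_le_exp.2 (by linarith [mul_comm x z])
  have h5 : Real.exp ε ≤ 1/(1-ε) := exp_le_inv_one_sub hε.le (by linarith)
  linarith

lemma key_arith {z ε M : ℝ} (hz : 1 ≤ z) (hε : 0 < ε) (hε6 : ε ≤ 1/6) (hM : 0 ≤ M) :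
    z * M ^ (2/z) ≤ ε * (1 + M / ((ε/z)^z * ε^2))^2 := by
  have hzpos : (0:ℝ) < z := by linarith
  have hεz : 0 < ε / z := div_pos hε hzpos
  have hεz1 : ε / z ≤ 1 := by rw [div_le_one hzpos]; linarith
  have hψpos : 0 < (ε/z)^z := Real.rpow_pos_of_pos hεz z
  set ψ := (ε/z)^z with hψ
  have hdnn : 0 ≤ M / (ψ * ε^2) := div_nonneg hM (by positivity)
  have hr1 : (1:ℝ) ≤ 1 + M / (ψ * ε^2) := by linarith
  rcases le_or_gt (M ^ (2/z)) (ε/z) with h | h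
  · calc z * M^(2/z) ≤ z * (ε/z) := mul_le_mul_of_nonneg_left h hzpos.le
      _ = ε := by field_simp
      _ ≤ ε * (1 + M/(ψ*ε^2))^2 := by
          nlinarith [mul_nonneg hε.le (mul_nonneg hdnn hdnn), mul_nonneg hε.le hdnn]
  · have hM0 : 0 < M := by
      rcases eq_or_lt_of_le hM with h0 | h0
      · exfalso
        rw [← h0, Real.zero_rpow (by positivity)] at h
        linarith
      · exact h0
    -- M ≥ (ε/z)^(z/2)
    have hs : (ε/z)^(z/2) ≤ M := by
      have h' := Real.rpow_le_rpow hεz.le h.le (by positivity : (0:ℝ) ≤ z/2)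
      rw [← Real.rpow_mul hM0.le] at h'
      have : (2/z) * (z/2) = 1 := by field_simp
      rw [this, Real.rpow_one] at h'
      exact h'
    -- key : z * ψ^2 * ε^3 ≤ M^(2 - 2/z)
    have key : z * ψ^2 * ε^3 ≤ M ^ (2 - 2/z) := by
      have hexp : (0:ℝ) ≤ 2 - 2/z := by
        have : 2/z ≤ 2 := by rw [div_le_iff₀ hzpos]; linarith
        linarith
      have h1 : ((ε/z)^(z/2)) ^ (2 - 2/z) ≤ M ^ (2 - 2/z) :=
        Real.rpow_le_rpow (by positivity) hs hexp
      have h2 : ((ε/z)^(z/2)) ^ (2 - 2/z) = (ε/z) ^ (z - 1) := by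
        rw [← Real.rpow_mul hεz.le]
        congr 1
        field_simp
      rw [h2] at h1
      refine le_trans ?_ h1
      -- z * ψ^2 * ε^3 ≤ (ε/z)^(z-1)
      have hψ2 : ψ^2 = (ε/z) ^ (z*2) := by
        rw [Real.rpow_mul hεz.le, ← hψ, Real.rpow_two]
      have hsplit : (ε/z) ^ (z*2) = (ε/z)^(z+1) * (ε/z)^(z-1) := by
        rw [← Real.rpow_add hεz]
        congr 1
        ring
      have hsmall : (ε/z)^(z+1) ≤ (ε/z)^(2:ℝ) :=
        Real.rpow_le_rpow_of_exponent_ge hεz hεz1 (by linarith)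
      have hfin : z * (ε/z)^(z+1) * ε^3 ≤ 1 := by
        have hstep : z * (ε/z)^(z+1) * ε^3 ≤ z * ((ε/z)^(2:ℝ)) * ε^3 := by
          have h3 : (0:ℝ) ≤ ε^3 := by positivity
          exact mul_le_mul_of_nonneg_right
            (mul_le_mul_of_nonneg_left hsmall hzpos.le) h3
        have heq : z * ((ε/z)^(2:ℝ)) * ε^3 = ε^5 / z := by
          rw [Real.rpow_two]
          field_simp
        have hle1 : ε^5 / z ≤ ε^5 := by
          apply div_le_self (by positivity) hz
        have hle2 : ε^5 ≤ 1 := pow_le_one₀ hε.le (by linarith)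
        linarith
      calc z * ψ^2 * ε^3 = (z * (ε/z)^(z+1) * ε^3) * (ε/z)^(z-1) := by
            rw [hψ2, hsplit]; ring
        _ ≤ 1 * (ε/z)^(z-1) :=
            mul_le_mul_of_nonneg_right hfin (Real.rpow_nonneg hεz.le _)
        _ = (ε/z)^(z-1) := one_mul _
    -- conclude
    have hψε : (0:ℝ) < ψ^2 * ε^3 := by positivity
    have h6 : z ≤ M^(2-2/z) / (ψ^2 * ε^3) := by
      rw [le_div_iff₀ hψε]
      linarith [key]
    have hMsplit : M^((2:ℝ)-2/z) * M^(2/z) = M^2 := by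
      rw [← Real.rpow_add hM0]
      have : (2:ℝ) - 2/z + 2/z = 2 := by ring
      rw [this, Real.rpow_two]
    have h7 : z * M^(2/z) ≤ M^2 / (ψ^2 * ε^3) := by
      have := mul_le_mul_of_nonneg_right h6 (Real.rpow_nonneg hM (2/z))
      calc z * M^(2/z) ≤ M^(2-2/z)/(ψ^2*ε^3) * M^(2/z) := this
        _ = M^2 / (ψ^2*ε^3) := by rw [div_mul_eq_mul_div, hMsplit]
    have hu : M/(ψ*ε^2) ≤ 1 + M/(ψ*ε^2) := by linarith
    have h8 : ε * (M/(ψ*ε^2))^2 ≤ ε * (1 + M/(ψ*ε^2))^2 := by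
      apply mul_le_mul_of_nonneg_left _ hε.le
      apply pow_le_pow_left₀ hdnn hu
    have h9 : M^2/(ψ^2*ε^3) = ε * (M/(ψ*ε^2))^2 := by
      field_simp
    linarith

end Stmt13SC

namespace Stmt13
open Metric Real Stmt13SC

variable {d : ℕ}

section Geometry
variable (W : Submodule ℝ (EuclideanSpace ℝ (Fin d))) (v : EuclideanSpace ℝ (Fin d))
  (r : ℝ)

/-- The lifted linear subspace. -/
noncomputable def slin : Submodule ℝ (EuclideanSpace ℝ (Fin (d+1))) :=
  (W.map (liftL d)) ⊔ (ℝ ∙ (lift v r))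

lemma mem_slin {x : EuclideanSpace ℝ (Fin (d+1))} :
    x ∈ slin W v r ↔ ∃ u ∈ W, ∃ t : ℝ, x = lift u 0 + t • lift v r := by
  constructor
  · intro hx
    have hx' : x ∈ (W.map (liftL d)) ⊔ (ℝ ∙ (lift v r)) := hx
    obtain ⟨y, hy, zz, hz, hxy⟩ := Submodule.mem_sup.1 hx'
    obtain ⟨u, hu, rfl⟩ := Submodule.mem_map.1 hy
    obtain ⟨t, rfl⟩ := Submodule.mem_span_singleton.1 hz
    exact ⟨u, hu, t, by rw [← hxy, liftL_apply]⟩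
  · rintro ⟨u, hu, t, rfl⟩
    show lift u 0 + t • lift v r ∈ (W.map (liftL d)) ⊔ (ℝ ∙ (lift v r))
    exact Submodule.add_mem_sup (Submodule.mem_map_of_mem hu)
      (Submodule.smul_mem _ t (Submodule.mem_span_singleton_self _))

lemma slin_nonempty : ((slin W v r : Set (EuclideanSpace ℝ (Fin (d+1))))).Nonempty :=
  ⟨0, Submodule.zero_mem _⟩

end Geometry

section Dist

variable {W : Submodule ℝ (EuclideanSpace ℝ (Fin d))} {v : EuclideanSpace ℝ (Fin d)}
  {r : ℝ} (hv : v ∈ Wᗮ) (q : EuclideanSpace ℝ (Fin d))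

/-- component of `q` orthogonal to `W`. -/
noncomputable def ycomp (W : Submodule ℝ (EuclideanSpace ℝ (Fin d)))
    (q : EuclideanSpace ℝ (Fin d)) : EuclideanSpace ℝ (Fin d) :=
  q - (W.orthogonalProjectionOnto q : EuclideanSpace ℝ (Fin d))

lemma ycomp_mem : ycomp W q ∈ Wᗮ := sub_orthogonalProjection_mem_orthogonal q

lemma ycomp_zero : ycomp W (0 : EuclideanSpace ℝ (Fin d)) = 0 := by
  simp [ycomp]

lemma norm_ycomp_le : ‖ycomp W q‖ ≤ ‖q‖ := by
  have h := Submodule.inner_right_of_mem_orthogonal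
    (Submodule.coe_mem (W.orthogonalProjectionOnto q)) (ycomp_mem (W := W) q)
  have hq : (W.orthogonalProjectionOnto q : EuclideanSpace ℝ (Fin d)) + ycomp W q = q := by
    simp [ycomp]
  have hsq := norm_add_sq_real ((W.orthogonalProjectionOnto q : EuclideanSpace ℝ (Fin d))) (ycomp W q)
  rw [h, hq] at hsq
  have hnn : 0 ≤ ‖ycomp W q‖ := norm_nonneg _
  nlinarith [norm_nonneg q, sq_nonneg ‖(W.orthogonalProjectionOnto q : EuclideanSpace ℝ (Fin d))‖]

/-- Distance to the affine subspace `v + W`, for `v ⊥ W`. -/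
lemma infDist_aff (hv : v ∈ Wᗮ) :
    infDist q (AffineSubspace.mk' v W : Set (EuclideanSpace ℝ (Fin d))) = ‖ycomp W q - v‖ := by
  have hmem : ∀ x : EuclideanSpace ℝ (Fin d),
      x ∈ (AffineSubspace.mk' v W : Set (EuclideanSpace ℝ (Fin d))) ↔ x - v ∈ W := by
    intro x
    rw [SetLike.mem_coe, AffineSubspace.mem_mk', vsub_eq_sub]
  set pw := (W.orthogonalProjectionOnto q : EuclideanSpace ℝ (Fin d)) with hpw
  apply le_antisymm
  · have hx : pw + v ∈ (AffineSubspace.mk' v W : Set (EuclideanSpace ℝ (Fin d))) := by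
      rw [hmem, add_sub_cancel_right]
      exact Submodule.coe_mem _
    refine le_trans (infDist_le_dist_of_mem hx) ?_
    rw [dist_eq_norm]
    have : q - (pw + v) = ycomp W q - v := by rw [ycomp, hpw]; abel
    rw [this]
  · apply le_infDist_of_forall ⟨pw + v, by
      rw [hmem, add_sub_cancel_right]
      exact Submodule.coe_mem _⟩
    intro x hx
    rw [hmem] at hx
    rw [dist_eq_norm]
    have hdecomp : q - x = (pw - (x - v)) + (ycomp W q - v) := by rw [ycomp, hpw]; abel
    have hWmem : pw - (x - v) ∈ W := Submodule.sub_mem _ (Submodule.coe_mem _) hx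
    have hWperp : ycomp W q - v ∈ Wᗮ := Submodule.sub_mem _ (ycomp_mem q) hv
    have hinner : (inner ℝ (pw - (x - v)) (ycomp W q - v) : ℝ) = 0 :=
      Submodule.inner_right_of_mem_orthogonal hWmem hWperp
    rw [hdecomp]
    have hsq := norm_add_sq_real (pw - (x - v)) (ycomp W q - v)
    rw [hinner] at hsq
    have h1 : ‖ycomp W q - v‖^2 ≤ ‖(pw - (x-v)) + (ycomp W q - v)‖^2 := by
      rw [hsq]; nlinarith [sq_nonneg ‖pw - (x-v)‖]
    have h2 : (0:ℝ) ≤ ‖(pw - (x-v)) + (ycomp W q - v)‖ := norm_nonneg _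
    nlinarith [norm_nonneg (ycomp W q - v)]

end Dist

end Stmt13

namespace Stmt13SC

lemma quad_lower (vn r ip yn f t : ℝ) (hC : 0 < vn^2 + r^2) (hf : f^2 = yn^2 - 2*ip + vn^2)
    (hcs : ip^2 ≤ yn^2 * vn^2) :
    r^2 * f^2 / (vn^2 + r^2) ≤ (yn^2 - 2*t*ip + t^2*vn^2) + r^2*(1-t)^2 := by
  rw [div_le_iff₀ hC]
  nlinarith [sq_nonneg ((vn^2 + r^2)*t - (ip + r^2))]

lemma quad_upper (vn r ip yn f : ℝ) (hC : 0 < vn^2 + r^2) (hf : f^2 = yn^2 - 2*ip + vn^2) :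
    (yn^2 - 2*((ip+r^2)/(vn^2+r^2))*ip + ((ip+r^2)/(vn^2+r^2))^2*vn^2)
      + r^2*(1-((ip+r^2)/(vn^2+r^2)))^2 ≤ (r^2 + yn^2) * f^2 / (vn^2+r^2) := by
  have heq : (yn^2 - 2*((ip+r^2)/(vn^2+r^2))*ip + ((ip+r^2)/(vn^2+r^2))^2*vn^2)
      + r^2*(1-((ip+r^2)/(vn^2+r^2)))^2
      = ((yn^2+r^2)*(vn^2+r^2) - (ip+r^2)^2)/(vn^2+r^2) := by
    field_simp
    ring
  rw [heq, div_le_div_iff_of_pos_right hC]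
  nlinarith [sq_nonneg (yn^2 - ip), hf]

end Stmt13SC

namespace Stmt13
open Metric Real Stmt13SC

variable {d : ℕ}

section Dist2

variable {W : Submodule ℝ (EuclideanSpace ℝ (Fin d))} {v : EuclideanSpace ℝ (Fin d)}
  {r : ℝ} (q : EuclideanSpace ℝ (Fin d))

lemma dist_lift_slin_sq (hv : v ∈ Wᗮ) {u : EuclideanSpace ℝ (Fin d)} (hu : u ∈ W) (t : ℝ) :
    dist (lift q r) (lift u 0 + t • lift v r) ^ 2
      = ‖(W.orthogonalProjectionOnto q : EuclideanSpace ℝ (Fin d)) - u‖^2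
        + (‖ycomp W q‖^2 - 2*t*(inner ℝ (ycomp W q) v : ℝ) + t^2*‖v‖^2) + r^2*(1-t)^2 := by
  set pw := (W.orthogonalProjectionOnto q : EuclideanSpace ℝ (Fin d)) with hpw
  set y := ycomp W q with hy
  have h1 : lift u 0 + t • lift v r = lift (u + t • v) (t * r) := by
    rw [lift_smul, lift_add, zero_add]
  have h2 : lift q r - lift (u + t•v) (t*r) = lift (q - (u + t•v)) (r - t*r) := lift_sub _ _ _ _
  rw [dist_eq_norm, h1, h2, norm_lift_sq]
  have hdecomp : q - (u + t•v) = (pw - u) + (y - t•v) := by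
    rw [hy, ycomp, hpw]; abel
  have hWmem : pw - u ∈ W := Submodule.sub_mem _ (Submodule.coe_mem _) hu
  have hWperp : y - t•v ∈ Wᗮ := Submodule.sub_mem _ (ycomp_mem q) (Submodule.smul_mem _ t hv)
  have hinner : (inner ℝ (pw - u) (y - t•v) : ℝ) = 0 :=
    Submodule.inner_right_of_mem_orthogonal hWmem hWperp
  rw [hdecomp]
  have hsq := norm_add_sq_real (pw - u) (y - t•v)
  rw [hinner] at hsq
  have hexp : ‖y - t•v‖^2 = ‖y‖^2 - 2*t*(inner ℝ y v : ℝ) + t^2*‖v‖^2 := by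
    rw [norm_sub_sq_real, real_inner_smul_right, norm_smul, Real.norm_eq_abs, mul_pow, sq_abs]
    ring
  rw [hsq, hexp]
  ring

lemma cs_ineq (y v : EuclideanSpace ℝ (Fin d)) : (inner ℝ y v : ℝ)^2 ≤ ‖y‖^2 * ‖v‖^2 := by
  have h := abs_real_inner_le_norm y v
  have h2 : |(inner ℝ y v : ℝ)|^2 = (inner ℝ y v : ℝ)^2 := sq_abs _
  nlinarith [abs_nonneg (inner ℝ y v : ℝ), norm_nonneg y, norm_nonneg v]

lemma f_sq (y v : EuclideanSpace ℝ (Fin d)) :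
    ‖y - v‖^2 = ‖y‖^2 - 2*(inner ℝ y v : ℝ) + ‖v‖^2 := by
  rw [norm_sub_sq_real]
  try ring

lemma slin_infDist_lower (hv : v ∈ Wᗮ) (hr : 0 < r) :
    Real.sqrt (r^2 * ‖ycomp W q - v‖^2 / (‖v‖^2 + r^2))
      ≤ infDist (lift q r) (slin W v r) := by
  apply le_infDist_of_forall (slin_nonempty W v r)
  intro x hx
  obtain ⟨u, hu, t, rfl⟩ := (mem_slin W v r).1 hx
  have hC : 0 < ‖v‖^2 + r^2 := by positivity
  have hkey := quad_lower ‖v‖ r (inner ℝ (ycomp W q) v : ℝ) ‖ycomp W q‖ ‖ycomp W q - v‖ t hC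
    (f_sq _ _) (cs_ineq _ _)
  have hd := dist_lift_slin_sq (r := r) q hv hu t
  have hnn : 0 ≤ ‖(W.orthogonalProjectionOnto q : EuclideanSpace ℝ (Fin d)) - u‖^2 := sq_nonneg _
  have hval : r^2 * ‖ycomp W q - v‖^2 / (‖v‖^2 + r^2)
      ≤ dist (lift q r) (lift u 0 + t • lift v r) ^ 2 := by
    rw [hd]; linarith
  calc Real.sqrt (r^2 * ‖ycomp W q - v‖^2 / (‖v‖^2 + r^2))
      ≤ Real.sqrt (dist (lift q r) (lift u 0 + t • lift v r) ^ 2) := Real.sqrt_le_sqrt hval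
    _ = dist (lift q r) (lift u 0 + t • lift v r) := Real.sqrt_sq dist_nonneg

lemma slin_infDist_upper (hv : v ∈ Wᗮ) (hr : 0 < r) :
    infDist (lift q r) (slin W v r)
      ≤ Real.sqrt ((r^2 + ‖ycomp W q‖^2) * ‖ycomp W q - v‖^2 / (‖v‖^2 + r^2)) := by
  have hC : 0 < ‖v‖^2 + r^2 := by positivity
  set t := ((inner ℝ (ycomp W q) v : ℝ) + r^2)/(‖v‖^2 + r^2) with ht
  set u := (W.orthogonalProjectionOnto q : EuclideanSpace ℝ (Fin d)) with hu
  have hmem : lift u 0 + t • lift v r ∈ slin W v r :=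
    (mem_slin W v r).2 ⟨u, Submodule.coe_mem _, t, rfl⟩
  refine le_trans (infDist_le_dist_of_mem hmem) ?_
  have hd := dist_lift_slin_sq (r := r) q hv (Submodule.coe_mem (W.orthogonalProjectionOnto q)) t
  have hquad := quad_upper ‖v‖ r (inner ℝ (ycomp W q) v : ℝ) ‖ycomp W q‖ ‖ycomp W q - v‖ hC
    (f_sq _ _)
  have hval : dist (lift q r) (lift u 0 + t • lift v r) ^ 2
      ≤ (r^2 + ‖ycomp W q‖^2) * ‖ycomp W q - v‖^2 / (‖v‖^2 + r^2) := by
    rw [hd]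
    simp only [hu, sub_self, norm_zero]
    calc (0:ℝ)^2 + (‖ycomp W q‖^2 - 2*t*(inner ℝ (ycomp W q) v : ℝ) + t^2*‖v‖^2) + r^2*(1-t)^2
        = (‖ycomp W q‖^2 - 2*t*(inner ℝ (ycomp W q) v : ℝ) + t^2*‖v‖^2) + r^2*(1-t)^2 := by ring
      _ ≤ _ := hquad
  calc dist (lift q r) (lift u 0 + t • lift v r)
      = Real.sqrt (dist (lift q r) (lift u 0 + t • lift v r) ^ 2) := (Real.sqrt_sq dist_nonneg).symm
    _ ≤ _ := Real.sqrt_le_sqrt hval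

end Dist2

end Stmt13

namespace Stmt13
open Metric Real Stmt13SC

variable {d : ℕ}

lemma mem_map_last_eq_zero {W : Submodule ℝ (EuclideanSpace ℝ (Fin d))}
    {x : EuclideanSpace ℝ (Fin (d+1))} (hx : x ∈ W.map (liftL d)) :
    x (Fin.last d) = 0 := by
  obtain ⟨w, _, rfl⟩ := Submodule.mem_map.1 hx
  exact lift_apply_last w 0

lemma slin_finrank (W : Submodule ℝ (EuclideanSpace ℝ (Fin d)))
    (v : EuclideanSpace ℝ (Fin d)) {r : ℝ} (hr : r ≠ 0) :
    Module.finrank ℝ (slin W v r) = Module.finrank ℝ W + 1 := by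
  have hu_last : (lift v r) (Fin.last d) = r := lift_apply_last v r
  have hu_ne : lift v r ≠ 0 := by
    intro h
    rw [h] at hu_last
    exact hr (by simpa using hu_last.symm)
  have hdisj : Disjoint (W.map (liftL d)) (ℝ ∙ (lift v r)) := by
    rw [Submodule.disjoint_def]
    intro x hx1 hx2
    obtain ⟨c, rfl⟩ := Submodule.mem_span_singleton.1 hx2
    have h1 : (c • lift v r) (Fin.last d) = c * r := by
      rw [lift_smul, lift_apply_last]
    have h2 := mem_map_last_eq_zero hx1
    have hc : c = 0 := by
      rw [h1] at h2
      rcases mul_eq_zero.1 h2 with h | h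
      · exact h
      · exact absurd h hr
    rw [hc, zero_smul]
  have hsum := Submodule.finrank_sup_add_finrank_inf_eq (W.map (liftL d)) (ℝ ∙ (lift v r))
  rw [hdisj.eq_bot, finrank_bot, add_zero, finrank_span_singleton hu_ne] at hsum
  have hmapeq : Module.finrank ℝ (W.map (liftL d)) = Module.finrank ℝ W :=
    (LinearEquiv.finrank_eq (Submodule.equivMapOfInjective (liftL d) liftL_injective W)).symm
  rw [slin, hsum, hmapeq]

lemma aff_decomp (S : AffineSubspace ℝ (EuclideanSpace ℝ (Fin d)))
    (hne : (S : Set (EuclideanSpace ℝ (Fin d))).Nonempty) :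
    ∃ v, v ∈ S.directionᗮ ∧ S = AffineSubspace.mk' v S.direction := by
  obtain ⟨p₀, hp₀⟩ := hne
  set w := (S.direction.orthogonalProjectionOnto p₀ : EuclideanSpace ℝ (Fin d)) with hw
  refine ⟨p₀ - w, sub_orthogonalProjection_mem_orthogonal _, ?_⟩
  have hmem : p₀ - w ∈ S := by
    have := AffineSubspace.vadd_mem_of_mem_direction
      (Submodule.neg_mem _ (show w ∈ S.direction from Submodule.coe_mem _)) hp₀
    simpa [vadd_eq_add, sub_eq_neg_add] using this
  exact (AffineSubspace.mk'_eq hmem).symm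

lemma lin_decomp (S' : Submodule ℝ (EuclideanSpace ℝ (Fin (d+1)))) {r : ℝ} (hr : r ≠ 0)
    (x₀ : EuclideanSpace ℝ (Fin (d+1))) (hx₀ : x₀ ∈ S') (hlast : x₀ (Fin.last d) ≠ 0) :
    ∃ v, ∃ W : Submodule ℝ (EuclideanSpace ℝ (Fin d)), v ∈ Wᗮ ∧ S' = slin W v r := by
  set u := (r / x₀ (Fin.last d)) • x₀ with hu
  have hu_mem : u ∈ S' := Submodule.smul_mem _ _ hx₀
  have hu_last : u (Fin.last d) = r := by
    rw [hu, PiLp.smul_apply, smul_eq_mul]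
    field_simp
  set u₀ : EuclideanSpace ℝ (Fin d) := (WithLp.toLp 2 (fun i => u i.castSucc)) with hu₀
  have hulift : u = lift u₀ r := by
    rw [← hu_last]
    exact eq_lift u
  set W := S'.comap (liftL d) with hW
  have hWmem : ∀ x : EuclideanSpace ℝ (Fin d), x ∈ W ↔ lift x 0 ∈ S' := by
    intro x
    rw [hW, Submodule.mem_comap, liftL_apply]
  have hS : ∀ x : EuclideanSpace ℝ (Fin (d+1)), x ∈ S' ↔
      ∃ w ∈ W, ∃ t : ℝ, x = lift w 0 + t • u := by
    intro x
    constructor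
    · intro hx
      set t := x (Fin.last d) / r with htdef
      have hsub_mem : x - t • u ∈ S' := Submodule.sub_mem _ hx (Submodule.smul_mem _ _ hu_mem)
      have hsub_last : (x - t • u) (Fin.last d) = 0 := by
        rw [PiLp.sub_apply, PiLp.smul_apply, hu_last, smul_eq_mul, htdef]
        field_simp
        ring
      set w : EuclideanSpace ℝ (Fin d) := (WithLp.toLp 2 (fun i => (x - t • u) i.castSucc)) with hwdef
      have hxw : x - t • u = lift w 0 := by
        rw [← hsub_last]
        exact eq_lift _
      refine ⟨w, ?_, t, ?_⟩
      · rw [hWmem, ← hxw]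
        exact hsub_mem
      · rw [← hxw]
        abel
    · rintro ⟨w, hw, t, rfl⟩
      exact Submodule.add_mem _ ((hWmem w).1 hw) (Submodule.smul_mem _ _ hu_mem)
  set pw := (W.orthogonalProjectionOnto u₀ : EuclideanSpace ℝ (Fin d)) with hpw
  have hpw_mem : pw ∈ W := Submodule.coe_mem _
  refine ⟨u₀ - pw, W, sub_orthogonalProjection_mem_orthogonal _, ?_⟩
  have hliftv : lift (u₀ - pw) r = u - lift pw 0 := by
    rw [hulift, lift_sub, sub_zero]
  have h1 : ∀ t : ℝ, t • lift (u₀ - pw) r = t • u - lift (t • pw) 0 := by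
    intro t
    rw [hliftv, smul_sub, lift_smul, mul_zero]
  ext x
  rw [hS, mem_slin]
  constructor
  · rintro ⟨w, hw, t, rfl⟩
    refine ⟨w + t • pw, Submodule.add_mem _ hw (Submodule.smul_mem _ _ hpw_mem), t, ?_⟩
    have h2 : lift (w + t • pw) 0 = lift w 0 + lift (t • pw) 0 := by
      rw [lift_add, add_zero]
    rw [h1, h2]
    abel
  · rintro ⟨w, hw, t, rfl⟩
    refine ⟨w - t • pw, Submodule.sub_mem _ hw (Submodule.smul_mem _ _ hpw_mem), t, ?_⟩
    have h3 : lift (w - t • pw) 0 = lift w 0 - lift (t • pw) 0 := by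
      rw [lift_sub, sub_zero]
    rw [h1, h3]
    abel

lemma exists_last_ne (S' : Submodule ℝ (EuclideanSpace ℝ (Fin (d+1)))) {r : ℝ} (hr : 0 < r)
    (hdist : infDist (lift (0 : EuclideanSpace ℝ (Fin d)) r)
      (S' : Set (EuclideanSpace ℝ (Fin (d+1)))) < r) :
    ∃ x₀ ∈ S', x₀ (Fin.last d) ≠ 0 := by
  by_contra hcon
  push_neg at hcon
  have hge : r ≤ infDist (lift (0 : EuclideanSpace ℝ (Fin d)) r)
      (S' : Set (EuclideanSpace ℝ (Fin (d+1)))) := by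
    apply le_infDist_of_forall ⟨0, Submodule.zero_mem _⟩
    intro x hx
    have hlast := hcon x hx
    set x0 : EuclideanSpace ℝ (Fin d) := (WithLp.toLp 2 (fun i => x i.castSucc)) with hx0
    have hxlift : x = lift x0 0 := by
      rw [← hlast]; exact eq_lift x
    rw [dist_eq_norm, hxlift, lift_sub, sub_zero]
    have hnsq := norm_lift_sq ((0 : EuclideanSpace ℝ (Fin d)) - x0) r
    nlinarith [norm_nonneg (lift ((0 : EuclideanSpace ℝ (Fin d)) - x0) r),
      sq_nonneg ‖(0 : EuclideanSpace ℝ (Fin d)) - x0‖]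
  linarith

end Stmt13

namespace Stmt13SC
open Real

lemma sq_rpow_half {f z : ℝ} (hf : 0 ≤ f) : (f^2)^(z/2) = f^z := by
  rw [← Real.rpow_natCast f 2, ← Real.rpow_mul hf]
  congr 1
  ring

lemma rpow_half_ge {X c z : ℝ} (hX : 0 ≤ X) (hz : 0 ≤ z) (h : X^2 ≤ c) : X^z ≤ c^(z/2) := by
  rw [← sq_rpow_half hX]
  exact Real.rpow_le_rpow (sq_nonneg X) h (by linarith)

lemma rpow_half_le {X c z : ℝ} (hX : 0 ≤ X) (hc : 0 ≤ c) (hz : 0 ≤ z) (h : c ≤ X^2) :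
    c^(z/2) ≤ X^z := by
  rw [← sq_rpow_half hX]
  exact Real.rpow_le_rpow hc h (by linarith)

lemma sq_le_m2 {b M z : ℝ} (hb : 0 ≤ b) (hz : 0 < z) (h : b^z ≤ M) : b^2 ≤ M^(2/z) := by
  have h1 : (b^z)^(2/z) ≤ M^(2/z) := Real.rpow_le_rpow (Real.rpow_nonneg hb z) h (by positivity)
  have h2 : (b^z)^(2/z) = b^(2:ℝ) := by
    rw [← Real.rpow_mul hb]
    congr 1
    field_simp
  rw [h2, Real.rpow_two] at h1
  exact h1

lemma rpow_lt_iff_lt_rpow {b c z : ℝ} (hb : 0 ≤ b) (hc : 0 < c) (hz : 0 < z) :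
    b^z < c ↔ b < c^(1/z) := by
  constructor
  · intro h
    by_contra hcon
    push_neg at hcon
    have h1 : (c^(1/z))^z ≤ b^z := Real.rpow_le_rpow (Real.rpow_nonneg hc.le _) hcon hz.le
    rw [← Real.rpow_mul hc.le, one_div_mul_cancel hz.ne', Real.rpow_one] at h1
    linarith
  · intro h
    have h1 : b^z < (c^(1/z))^z := Real.rpow_lt_rpow hb h hz
    rwa [← Real.rpow_mul hc.le, one_div_mul_cancel hz.ne', Real.rpow_one] at h1

lemma dist_cond_iff {a vn r : ℝ} (ha : 0 < a) (hvn : 0 ≤ vn) (hr : 0 < r) :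
    Real.sqrt (r^2 * vn^2 / (vn^2 + r^2)) < (a / Real.sqrt (a^2 + r^2)) * r ↔ vn < a := by
  have hC : 0 < vn^2 + r^2 := by positivity
  have hA : 0 < a^2 + r^2 := by positivity
  have hsA : 0 < Real.sqrt (a^2 + r^2) := Real.sqrt_pos.2 hA
  have hrhs : 0 < (a / Real.sqrt (a^2 + r^2)) * r := by positivity
  have h1 : ((a / Real.sqrt (a^2+r^2)) * r)^2 = a^2*r^2/(a^2+r^2) := by
    rw [mul_pow, div_pow, Real.sq_sqrt hA.le]
    ring
  rw [← Real.sqrt_sq hrhs.le, h1, Real.sqrt_lt_sqrt_iff (by positivity),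
    div_lt_div_iff₀ hC hA]
  have hr4 : 0 < r^4 := by positivity
  constructor
  · intro h
    by_contra hcon
    push_neg at hcon
    have h2 : a^2 ≤ vn^2 := by nlinarith
    nlinarith
  · intro h
    have h2 : vn^2 < a^2 := by nlinarith
    nlinarith

end Stmt13SC

namespace Stmt13
open Metric Real Stmt13SC

variable {d : ℕ}

lemma slin_infDist_zero {W : Submodule ℝ (EuclideanSpace ℝ (Fin d))}
    {v : EuclideanSpace ℝ (Fin d)} {r : ℝ} (hv : v ∈ Wᗮ) (hr : 0 < r) :
    infDist (lift (0 : EuclideanSpace ℝ (Fin d)) r) (slin W v r)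
      = Real.sqrt (r^2 * ‖v‖^2 / (‖v‖^2 + r^2)) := by
  have h0 : ycomp W (0 : EuclideanSpace ℝ (Fin d)) = 0 := ycomp_zero
  have hlo := slin_infDist_lower (0 : EuclideanSpace ℝ (Fin d)) hv hr
  have hup := slin_infDist_upper (0 : EuclideanSpace ℝ (Fin d)) hv hr
  rw [h0, zero_sub, norm_neg] at hlo hup
  rw [norm_zero] at hup
  apply le_antisymm
  · calc infDist (lift (0 : EuclideanSpace ℝ (Fin d)) r) (slin W v r)
        ≤ Real.sqrt ((r^2 + 0^2) * ‖v‖^2 / (‖v‖^2 + r^2)) := hup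
      _ = Real.sqrt (r^2 * ‖v‖^2 / (‖v‖^2 + r^2)) := by norm_num
  · exact hlo

lemma pointwise_bounds {W : Submodule ℝ (EuclideanSpace ℝ (Fin d))}
    {v : EuclideanSpace ℝ (Fin d)} {z ε r M : ℝ}
    (hv : v ∈ Wᗮ) (hz : 1 ≤ z) (hε : 0 < ε) (hε6 : ε ≤ 1/6) (hM : 0 ≤ M)
    (hrM : r = 1 + M / ((ε/z)^z * ε^2)) (q : EuclideanSpace ℝ (Fin d))
    (hqM : dist q 0 ^ z ≤ M) :
    ((r^2/(‖v‖^2+r^2))^(z/2))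
        * infDist q (AffineSubspace.mk' v W : Set (EuclideanSpace ℝ (Fin d))) ^ z
      ≤ infDist (lift q r) (slin W v r) ^ z ∧
    infDist (lift q r) (slin W v r) ^ z
      ≤ ((r^2/(‖v‖^2+r^2))^(z/2))
        * ((1/(1-ε)) * infDist q (AffineSubspace.mk' v W : Set (EuclideanSpace ℝ (Fin d))) ^ z) := by
  have hz0 : (0:ℝ) < z := by linarith
  have hψ0 : (0:ℝ) < (ε/z)^z := Real.rpow_pos_of_pos (by positivity) z
  have hr1 : 1 ≤ r := by
    rw [hrM]
    have : 0 ≤ M / ((ε/z)^z * ε^2) := by positivity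
    linarith
  have hr0 : 0 < r := by linarith
  have hC : 0 < ‖v‖^2 + r^2 := by positivity
  rw [infDist_aff q hv]
  set y := ycomp W q with hy
  set f := ‖y - v‖ with hf
  set F := infDist (lift q r) (slin W v r) with hFdef
  have hFnn : 0 ≤ F := infDist_nonneg
  have hfnn : 0 ≤ f := norm_nonneg _
  set m2 := M^(2/z) with hm2
  have hm2nn : 0 ≤ m2 := Real.rpow_nonneg hM _
  have hy2 : ‖y‖^2 ≤ m2 := by
    have h1 : ‖y‖ ≤ dist q 0 := by
      rw [dist_zero_right]
      exact norm_ycomp_le q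
    have h2 : ‖y‖^2 ≤ (dist q 0)^2 := by
      apply pow_le_pow_left₀ (norm_nonneg _) h1
    exact le_trans h2 (sq_le_m2 dist_nonneg hz0 hqM)
  -- squared bounds
  have hlo := slin_infDist_lower q hv hr0
  have hup := slin_infDist_upper q hv hr0
  rw [← hy, ← hf, ← hFdef] at hlo hup
  have hXnn : (0:ℝ) ≤ r^2 * f^2 / (‖v‖^2 + r^2) := by positivity
  have hsq_lower : r^2*f^2/(‖v‖^2+r^2) ≤ F^2 := by
    have := pow_le_pow_left₀ (Real.sqrt_nonneg _) hlo 2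
    rwa [Real.sq_sqrt hXnn] at this
  have hsq_upper : F^2 ≤ (r^2+m2)*f^2/(‖v‖^2+r^2) := by
    have hYnn : (0:ℝ) ≤ (r^2+‖y‖^2)*f^2/(‖v‖^2+r^2) := by positivity
    have h1 := pow_le_pow_left₀ hFnn hup 2
    rw [Real.sq_sqrt hYnn] at h1
    refine le_trans h1 ?_
    gcongr
  -- rpow bounds
  have h1 : (r^2*f^2/(‖v‖^2+r^2))^(z/2) ≤ F^z :=
    rpow_half_le hFnn hXnn hz0.le hsq_lower
  have h2 : F^z ≤ ((r^2+m2)*f^2/(‖v‖^2+r^2))^(z/2) :=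
    rpow_half_ge hFnn hz0.le hsq_upper
  have hsplit1 : (r^2*f^2/(‖v‖^2+r^2))^(z/2)
      = (r^2/(‖v‖^2+r^2))^(z/2) * f^z := by
    rw [show r^2*f^2/(‖v‖^2+r^2) = (r^2/(‖v‖^2+r^2)) * f^2 by ring,
      Real.mul_rpow (by positivity) (sq_nonneg f), sq_rpow_half hfnn]
  have hsplit2 : ((r^2+m2)*f^2/(‖v‖^2+r^2))^(z/2)
      = (r^2/(‖v‖^2+r^2))^(z/2) * ((1+m2/r^2)^(z/2) * f^z) := by
    rw [show (r^2+m2)*f^2/(‖v‖^2+r^2) = (r^2/(‖v‖^2+r^2)) * ((1+m2/r^2) * f^2) by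
        field_simp,
      Real.mul_rpow (by positivity) (by positivity),
      Real.mul_rpow (by positivity) (sq_nonneg f), sq_rpow_half hfnn]
  have hzx : z * (m2/r^2) ≤ ε := by
    have hka := key_arith hz hε hε6 hM
    rw [← hrM] at hka
    rw [show z * (m2/r^2) = z*m2/r^2 by ring, div_le_iff₀ (by positivity : (0:ℝ) < r^2)]
    calc z * m2 = z * M^(2/z) := by rw [hm2]
      _ ≤ ε * r^2 := hka
      _ = ε * r^2 := rfl
  have hHb : (1+m2/r^2)^(z/2) ≤ 1/(1-ε) :=
    one_add_rpow_le (by positivity) hz hε (by linarith) hzx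
  constructor
  · rw [← hsplit1]; exact h1
  · refine le_trans h2 ?_
    rw [hsplit2]
    have hγnn : (0:ℝ) ≤ (r^2/(‖v‖^2+r^2))^(z/2) := Real.rpow_nonneg (by positivity) _
    apply mul_le_mul_of_nonneg_left ?_ hγnn
    apply mul_le_mul_of_nonneg_right hHb (Real.rpow_nonneg hfnn z)

end Stmt13

namespace Stmt13SC

lemma sum_bounds {α : Type*} (P : Finset α) (w f F : α → ℝ) {γ H : ℝ} (hγ : 0 < γ)
    (hw : ∀ q ∈ P, 0 ≤ w q)
    (hb : ∀ q ∈ P, γ * f q ≤ F q ∧ F q ≤ γ * (H * f q)) :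
    γ * (∑ q ∈ P, w q * f q) ≤ ∑ q ∈ P, w q * F q ∧
    ∑ q ∈ P, w q * F q ≤ γ * H * ∑ q ∈ P, w q * f q := by
  constructor
  · rw [Finset.mul_sum]
    apply Finset.sum_le_sum
    intro q hq
    calc γ * (w q * f q) = w q * (γ * f q) := by ring
      _ ≤ w q * F q := mul_le_mul_of_nonneg_left (hb q hq).1 (hw q hq)
  · calc ∑ q ∈ P, w q * F q ≤ ∑ q ∈ P, w q * (γ * (H * f q)) :=
        Finset.sum_le_sum fun q hq => mul_le_mul_of_nonneg_left (hb q hq).2 (hw q hq)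
      _ = γ * H * ∑ q ∈ P, w q * f q := by
        rw [Finset.mul_sum]
        exact Finset.sum_congr rfl fun q _ => by ring

lemma ratio_bounds {α : Type*} (P : Finset α) (w f F : α → ℝ) {γ H : ℝ} (hγ : 0 < γ)
    (hH : 1 ≤ H) (hw : ∀ q ∈ P, 0 ≤ w q) (hf : ∀ q ∈ P, 0 ≤ f q)
    (hF : ∀ q ∈ P, 0 ≤ F q)
    (hb : ∀ q ∈ P, γ * f q ≤ F q ∧ F q ≤ γ * (H * f q))
    {p : α} (hp : p ∈ P) (hden : 0 < ∑ q ∈ P, w q * f q) :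
    0 < ∑ q ∈ P, w q * F q ∧
    w p * F p / (∑ q ∈ P, w q * F q) ≤ H * (w p * f p / ∑ q ∈ P, w q * f q) ∧
    w p * f p / (∑ q ∈ P, w q * f q) ≤ H * (w p * F p / ∑ q ∈ P, w q * F q) := by
  obtain ⟨hS1, hS2⟩ := sum_bounds P w f F hγ hw hb
  set S1 := ∑ q ∈ P, w q * f q with hS1def
  set S2 := ∑ q ∈ P, w q * F q with hS2def
  have hH0 : 0 < H := by linarith
  have hS2pos : 0 < S2 := lt_of_lt_of_le (by positivity) hS1
  have hfp : 0 ≤ w p * f p := mul_nonneg (hw p hp) (hf p hp)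
  have hFp : 0 ≤ w p * F p := mul_nonneg (hw p hp) (hF p hp)
  refine ⟨hS2pos, ?_, ?_⟩
  · have hub : w p * F p ≤ γ * (H * (w p * f p)) := by
      calc w p * F p ≤ w p * (γ * (H * f p)) :=
            mul_le_mul_of_nonneg_left (hb p hp).2 (hw p hp)
        _ = γ * (H * (w p * f p)) := by ring
    have hmain : w p * F p / S2 ≤ (γ * (H * (w p * f p))) / (γ * S1) :=
      div_le_div₀ (by positivity) hub (by positivity) hS1
    calc w p * F p / S2 ≤ (γ * (H * (w p * f p))) / (γ * S1) := hmain
      _ = H * (w p * f p / S1) := by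
        rw [mul_div_mul_left _ _ hγ.ne', mul_div_assoc]
  · have ha : w p * f p ≤ (w p * F p) / γ := by
      rw [le_div_iff₀ hγ]
      calc w p * f p * γ = w p * (γ * f p) := by ring
        _ ≤ w p * F p := mul_le_mul_of_nonneg_left (hb p hp).1 (hw p hp)
    have hd : S2 / (γ * H) ≤ S1 := by
      rw [div_le_iff₀ (by positivity)]
      calc S2 ≤ γ * H * S1 := hS2
        _ = S1 * (γ * H) := by ring
    have hmain : w p * f p / S1 ≤ ((w p * F p)/γ) / (S2/(γ*H)) :=
      div_le_div₀ (div_nonneg hFp hγ.le) ha (by positivity) hd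
    calc w p * f p / S1 ≤ ((w p * F p)/γ) / (S2/(γ*H)) := hmain
      _ = H * (w p * F p / S2) := by
        field_simp

lemma ratio01 {α : Type*} (P : Finset α) (w g : α → ℝ) {p : α} (hp : p ∈ P)
    (hwg : ∀ q ∈ P, 0 ≤ w q * g q) (hden : 0 < ∑ q ∈ P, w q * g q) :
    0 ≤ w p * g p / (∑ q ∈ P, w q * g q) ∧ w p * g p / (∑ q ∈ P, w q * g q) ≤ 1 :=
  ⟨div_nonneg (hwg p hp) hden.le,
    (div_le_one hden).2 (Finset.single_le_sum hwg hp)⟩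

end Stmt13SC

set_option maxHeartbeats 2000000 in

open Metric Real Stmt13 Stmt13SC in
/-- With a weighted set `(P,w)` of `n ≥ 1` points in `ℝ^d`, `z ≥ 1`,
`ε ∈ (0, 1/(2^{z+1}+2)]`, `ψ = (ε/z)^z`, `r = 1 + max_{q∈P} dist(q,0)^z/(ψε²)`,
`c₀ = (εr)^{1/z}/√((εr)^{2/z}+r²)`, `c₁ = 2^z+1`, `q' = (q|r)`: let `Q₁` be the nonempty
affine `k`-subspaces `S` of `ℝ^d` with `D_z(0,S) < εr` and `Q₁'` the `(k+1)`-dimensional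
linear subspaces `S'` of `ℝ^{d+1}` with `dist(r·e_{d+1},S') < c₀r`. Then for every
`p ∈ P`,
`|sup_{S∈Q₁} w(p)D_z(p,S)/Σ_q w(q)D_z(q,S) − sup_{S'∈Q₁'} w(p)D_z(p',S')/Σ_q w(q)D_z(q',S')|
  ≤ 16c₁ε · sup_{S'∈Q₁'} w(p)D_z(p',S')/Σ_q w(q)D_z(q',S')`,
both suprema over subspaces with nonzero denominator. -/
theorem stmt13 (d k n : ℕ) (hd : 1 ≤ d) (hk : k ≤ d - 1) (hn : 1 ≤ n)
    (z ε : ℝ) (hz : 1 ≤ z) (hε : ε ∈ Set.Ioc (0 : ℝ) (1 / (2 ^ (z + 1) + 2)))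
    (P : Finset (EuclideanSpace ℝ (Fin d))) (hP : P.Nonempty) (hcard : P.card = n)
    (w : EuclideanSpace ℝ (Fin d) → ℝ) (hw : ∀ q ∈ P, 0 ≤ w q)
    (ψ r c₀ c₁ : ℝ) (hψ : ψ = (ε / z) ^ z)
    (hr : r = 1 + P.sup' hP fun q => dist q 0 ^ z / (ψ * ε ^ 2))
    (hc₀ : c₀ = (ε * r) ^ (1 / z) / Real.sqrt ((ε * r) ^ (2 / z) + r ^ 2))
    (hc₁ : c₁ = 2 ^ z + 1)
    (e : EuclideanSpace ℝ (Fin (d + 1))) (he : e = lift 0 1)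
    (p : EuclideanSpace ℝ (Fin d)) (hp : p ∈ P) :
    |sSup {t : ℝ | ∃ S : AffineSubspace ℝ (EuclideanSpace ℝ (Fin d)),
        (S : Set (EuclideanSpace ℝ (Fin d))).Nonempty ∧
        Module.finrank ℝ S.direction = k ∧
        Metric.infDist 0 (S : Set (EuclideanSpace ℝ (Fin d))) ^ z < ε * r ∧
        0 < (∑ q ∈ P, w q * Metric.infDist q (S : Set (EuclideanSpace ℝ (Fin d))) ^ z) ∧
        t = w p * Metric.infDist p (S : Set (EuclideanSpace ℝ (Fin d))) ^ z /
            ∑ q ∈ P, w q * Metric.infDist q (S : Set (EuclideanSpace ℝ (Fin d))) ^ z} -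
      sSup {t : ℝ | ∃ S' : Submodule ℝ (EuclideanSpace ℝ (Fin (d + 1))),
        Module.finrank ℝ S' = k + 1 ∧
        Metric.infDist (r • e) (S' : Set (EuclideanSpace ℝ (Fin (d + 1)))) < c₀ * r ∧
        0 < (∑ q ∈ P, w q *
            Metric.infDist (lift q r) (S' : Set (EuclideanSpace ℝ (Fin (d + 1)))) ^ z) ∧
        t = w p * Metric.infDist (lift p r) (S' : Set (EuclideanSpace ℝ (Fin (d + 1)))) ^ z /
            ∑ q ∈ P, w q *
              Metric.infDist (lift q r) (S' : Set (EuclideanSpace ℝ (Fin (d + 1)))) ^ z}| ≤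
      16 * c₁ * ε *
        sSup {t : ℝ | ∃ S' : Submodule ℝ (EuclideanSpace ℝ (Fin (d + 1))),
          Module.finrank ℝ S' = k + 1 ∧
          Metric.infDist (r • e) (S' : Set (EuclideanSpace ℝ (Fin (d + 1)))) < c₀ * r ∧
          0 < (∑ q ∈ P, w q *
              Metric.infDist (lift q r) (S' : Set (EuclideanSpace ℝ (Fin (d + 1)))) ^ z) ∧
          t = w p * Metric.infDist (lift p r) (S' : Set (EuclideanSpace ℝ (Fin (d + 1)))) ^ z /
              ∑ q ∈ P, w q *
                Metric.infDist (lift q r) (S' : Set (EuclideanSpace ℝ (Fin (d + 1)))) ^ z} := by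
  classical
  obtain ⟨hε0, hεle⟩ := hε
  have hz0 : (0:ℝ) < z := by linarith
  -- ε ≤ 1/6
  have h2z : (4:ℝ) ≤ 2^(z+1) := by
    have h1 : (2:ℝ)^(2:ℝ) ≤ 2^(z+1) :=
      Real.rpow_le_rpow_of_exponent_le one_le_two (by linarith)
    rw [Real.rpow_two] at h1
    norm_num at h1
    linarith
  have hε6 : ε ≤ 1/6 := by
    refine le_trans hεle ?_
    apply one_div_le_one_div_of_le (by norm_num)
    linarith
  have hψ0 : 0 < ψ := by
    rw [hψ]
    exact Real.rpow_pos_of_pos (by positivity) z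
  -- M and its properties
  set Msup := P.sup' hP fun q => dist q 0 ^ z / (ψ * ε ^ 2) with hMsup
  set M := Msup * (ψ * ε^2) with hMdef
  have hψε2 : (0:ℝ) < ψ * ε^2 := by positivity
  have hMsup0 : 0 ≤ Msup := by
    obtain ⟨q₀, hq₀⟩ := hP
    refine le_trans ?_ (Finset.le_sup' (f := fun q => dist q 0 ^ z / (ψ * ε ^ 2)) hq₀)
    positivity
  have hM0 : 0 ≤ M := by positivity
  have hMq : ∀ q ∈ P, dist q 0 ^ z ≤ M := by
    intro q hq
    have h1 : dist q 0 ^ z / (ψ * ε^2) ≤ Msup :=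
      Finset.le_sup' (f := fun q => dist q 0 ^ z / (ψ * ε ^ 2)) hq
    calc dist q 0 ^ z = (dist q 0 ^ z / (ψ * ε^2)) * (ψ * ε^2) := by
          field_simp
      _ ≤ Msup * (ψ * ε^2) := mul_le_mul_of_nonneg_right h1 hψε2.le
  have hMover : M / (ψ * ε^2) = Msup := by
    rw [hMdef, mul_div_assoc, div_self hψε2.ne', mul_one]
  have hrM : r = 1 + M / ((ε/z)^z * ε^2) := by
    rw [← hψ, hMover]
    exact hr
  have hr1 : (1:ℝ) ≤ r := by
    rw [hr]
    linarith
  have hr0 : (0:ℝ) < r := by linarith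
  -- a and c₀
  have hεr : (0:ℝ) < ε * r := by positivity
  set a := (ε*r)^(1/z) with hadef
  have ha0 : 0 < a := Real.rpow_pos_of_pos hεr _
  have ha2 : (ε*r)^(2/z) = a^2 := by
    rw [hadef, ← Real.rpow_natCast ((ε*r)^(1/z)) 2, ← Real.rpow_mul hεr.le]
    congr 1
    push_cast
    ring
  have hc0eq : c₀ = a / Real.sqrt (a^2 + r^2) := by
    rw [hc₀, ha2]
  have hre : r • e = lift (0 : EuclideanSpace ℝ (Fin d)) r := by
    rw [he, lift_smul, smul_zero, mul_one]
  -- H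
  have h1ε : (0:ℝ) < 1 - ε := by linarith
  set H := 1/(1-ε) with hHdef
  have hH1 : (1:ℝ) ≤ H := by
    rw [hHdef, le_div_iff₀ h1ε]
    linarith
  have hH0 : (0:ℝ) < H := by linarith
  -- c₁
  have hc₁1 : (1:ℝ) ≤ c₁ := by
    rw [hc₁]
    have : (0:ℝ) < 2^z := Real.rpow_pos_of_pos two_pos z
    linarith
  -- package per (v, W)
  set T1 := {t : ℝ | ∃ S : AffineSubspace ℝ (EuclideanSpace ℝ (Fin d)),
        (S : Set (EuclideanSpace ℝ (Fin d))).Nonempty ∧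
        Module.finrank ℝ S.direction = k ∧
        Metric.infDist 0 (S : Set (EuclideanSpace ℝ (Fin d))) ^ z < ε * r ∧
        0 < (∑ q ∈ P, w q * Metric.infDist q (S : Set (EuclideanSpace ℝ (Fin d))) ^ z) ∧
        t = w p * Metric.infDist p (S : Set (EuclideanSpace ℝ (Fin d))) ^ z /
            ∑ q ∈ P, w q * Metric.infDist q (S : Set (EuclideanSpace ℝ (Fin d))) ^ z} with hT1
  set T2 := {t : ℝ | ∃ S' : Submodule ℝ (EuclideanSpace ℝ (Fin (d + 1))),
        Module.finrank ℝ S' = k + 1 ∧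
        Metric.infDist (r • e) (S' : Set (EuclideanSpace ℝ (Fin (d + 1)))) < c₀ * r ∧
        0 < (∑ q ∈ P, w q *
            Metric.infDist (lift q r) (S' : Set (EuclideanSpace ℝ (Fin (d + 1)))) ^ z) ∧
        t = w p * Metric.infDist (lift p r) (S' : Set (EuclideanSpace ℝ (Fin (d + 1)))) ^ z /
            ∑ q ∈ P, w q *
              Metric.infDist (lift q r) (S' : Set (EuclideanSpace ℝ (Fin (d + 1)))) ^ z} with hT2
  -- membership transfer 1 → 2
  have key12 : ∀ t ∈ T1, ∃ t' ∈ T2, t ≤ H * t' := by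
    intro t ht
    rw [hT1] at ht
    obtain ⟨S, hne, hrk, hdist, hden, htval⟩ := ht
    obtain ⟨v, hv, hSeq⟩ := aff_decomp S hne
    set W := S.direction with hWdef
    have hset : (S : Set (EuclideanSpace ℝ (Fin d)))
        = ((AffineSubspace.mk' v W : AffineSubspace ℝ (EuclideanSpace ℝ (Fin d))) :
            Set (EuclideanSpace ℝ (Fin d))) := by
      rw [← hSeq]
    rw [hset] at hdist hden htval
    -- ‖v‖ < a
    have hv_eq : Metric.infDist 0
        ((AffineSubspace.mk' v W : AffineSubspace ℝ (EuclideanSpace ℝ (Fin d))) :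
          Set (EuclideanSpace ℝ (Fin d))) = ‖v‖ := by
      rw [infDist_aff 0 hv, ycomp_zero, zero_sub, norm_neg]
    rw [hv_eq] at hdist
    have hva : ‖v‖ < a := by
      rw [hadef]
      exact (rpow_lt_iff_lt_rpow (norm_nonneg v) hεr hz0).1 hdist
    -- bounds
    set γ := (r^2/(‖v‖^2+r^2))^(z/2) with hγdef
    have hγ0 : 0 < γ := Real.rpow_pos_of_pos (by positivity) _
    have hb : ∀ q ∈ P,
        γ * (Metric.infDist q ((AffineSubspace.mk' v W : AffineSubspace ℝ _) : Set _) ^ z)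
          ≤ Metric.infDist (lift q r) (slin W v r) ^ z ∧
        Metric.infDist (lift q r) (slin W v r) ^ z
          ≤ γ * (H * Metric.infDist q ((AffineSubspace.mk' v W : AffineSubspace ℝ _) : Set _) ^ z) := by
      intro q hq
      have := pointwise_bounds hv hz hε0 hε6 hM0 hrM q (hMq q hq)
      rw [← hγdef, ← hHdef] at this
      exact this
    have hf : ∀ q ∈ P, 0 ≤ Metric.infDist q
        ((AffineSubspace.mk' v W : AffineSubspace ℝ _) : Set _) ^ z :=
      fun q _ => Real.rpow_nonneg infDist_nonneg z
    have hF : ∀ q ∈ P, 0 ≤ Metric.infDist (lift q r) (slin W v r) ^ z :=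
      fun q _ => Real.rpow_nonneg infDist_nonneg z
    obtain ⟨hS2pos, hr21, hr12⟩ := ratio_bounds P w _ _ hγ0 hH1 hw hf hF hb hp hden
    refine ⟨w p * Metric.infDist (lift p r) (slin W v r) ^ z /
        ∑ q ∈ P, w q * Metric.infDist (lift q r) (slin W v r) ^ z, ?_, ?_⟩
    · rw [hT2]
      refine ⟨slin W v r, ?_, ?_, hS2pos, rfl⟩
      · rw [slin_finrank W v hr0.ne', hrk]
      · rw [hre, slin_infDist_zero hv hr0, hc0eq]
        exact (dist_cond_iff ha0 (norm_nonneg v) hr0).2 hva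
    · rw [htval]
      exact hr12
  -- membership transfer 2 → 1
  have key21 : ∀ t' ∈ T2, ∃ t ∈ T1, t' ≤ H * t := by
    intro t' ht'
    rw [hT2] at ht'
    obtain ⟨S', hrk', hdist', hden', htval'⟩ := ht'
    -- c₀ < 1
    have hc01 : c₀ < 1 := by
      rw [hc0eq, div_lt_one (Real.sqrt_pos.2 (by positivity))]
      exact (Real.lt_sqrt ha0.le).2 (by nlinarith)
    have hdr : Metric.infDist (lift (0 : EuclideanSpace ℝ (Fin d)) r)
        (S' : Set (EuclideanSpace ℝ (Fin (d+1)))) < r := by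
      rw [hre] at hdist'
      calc Metric.infDist (lift (0 : EuclideanSpace ℝ (Fin d)) r)
            (S' : Set (EuclideanSpace ℝ (Fin (d+1)))) < c₀ * r := hdist'
        _ < 1 * r := by
            apply mul_lt_mul_of_pos_right hc01 hr0
        _ = r := one_mul r
    obtain ⟨x₀, hx₀S, hx₀last⟩ := exists_last_ne S' hr0 hdr
    obtain ⟨v, W, hv, hSeq'⟩ := lin_decomp S' hr0.ne' x₀ hx₀S hx₀last
    subst hSeq'
    -- finrank W = k
    have hrkW : Module.finrank ℝ W = k := by
      rw [slin_finrank W v hr0.ne'] at hrk'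
      omega
    -- ‖v‖ < a
    rw [hre, slin_infDist_zero hv hr0, hc0eq] at hdist'
    have hva : ‖v‖ < a := (dist_cond_iff ha0 (norm_nonneg v) hr0).1 hdist'
    -- bounds
    set γ := (r^2/(‖v‖^2+r^2))^(z/2) with hγdef
    have hγ0 : 0 < γ := Real.rpow_pos_of_pos (by positivity) _
    have hb : ∀ q ∈ P,
        γ * (Metric.infDist q ((AffineSubspace.mk' v W : AffineSubspace ℝ _) : Set _) ^ z)
          ≤ Metric.infDist (lift q r) (slin W v r) ^ z ∧
        Metric.infDist (lift q r) (slin W v r) ^ z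
          ≤ γ * (H * Metric.infDist q ((AffineSubspace.mk' v W : AffineSubspace ℝ _) : Set _) ^ z) := by
      intro q hq
      have := pointwise_bounds hv hz hε0 hε6 hM0 hrM q (hMq q hq)
      rw [← hγdef, ← hHdef] at this
      exact this
    have hf : ∀ q ∈ P, 0 ≤ Metric.infDist q
        ((AffineSubspace.mk' v W : AffineSubspace ℝ _) : Set _) ^ z :=
      fun q _ => Real.rpow_nonneg infDist_nonneg z
    have hF : ∀ q ∈ P, 0 ≤ Metric.infDist (lift q r) (slin W v r) ^ z :=
      fun q _ => Real.rpow_nonneg infDist_nonneg z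
    -- denominator on the affine side
    have hdenf : 0 < ∑ q ∈ P, w q *
        Metric.infDist q ((AffineSubspace.mk' v W : AffineSubspace ℝ _) : Set _) ^ z := by
      by_contra hcon
      push_neg at hcon
      have hsb := (sum_bounds P w _ _ hγ0 hw hb).2
      have : (0:ℝ) < γ * H * ∑ q ∈ P, w q *
          Metric.infDist q ((AffineSubspace.mk' v W : AffineSubspace ℝ _) : Set _) ^ z :=
        lt_of_lt_of_le hden' hsb
      nlinarith [mul_le_mul_of_nonneg_left hcon (mul_nonneg hγ0.le hH0.le)]
    obtain ⟨hS2pos, hr21, hr12⟩ := ratio_bounds P w _ _ hγ0 hH1 hw hf hF hb hp hdenf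
    refine ⟨w p * Metric.infDist p
        ((AffineSubspace.mk' v W : AffineSubspace ℝ _) : Set _) ^ z /
        ∑ q ∈ P, w q * Metric.infDist q
          ((AffineSubspace.mk' v W : AffineSubspace ℝ _) : Set _) ^ z, ?_, ?_⟩
    · rw [hT1]
      refine ⟨AffineSubspace.mk' v W, AffineSubspace.mk'_nonempty v W, ?_, ?_, hdenf, rfl⟩
      · rw [AffineSubspace.direction_mk']
        exact hrkW
      · have hv_eq : Metric.infDist 0
            ((AffineSubspace.mk' v W : AffineSubspace ℝ (EuclideanSpace ℝ (Fin d))) :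
              Set (EuclideanSpace ℝ (Fin d))) = ‖v‖ := by
          rw [infDist_aff 0 hv, ycomp_zero, zero_sub, norm_neg]
        rw [hv_eq]
        exact (rpow_lt_iff_lt_rpow (norm_nonneg v) hεr hz0).2 (by rw [← hadef]; exact hva)
    · rw [htval']
      exact hr21
  -- elements of T1, T2 are in [0, 1]
  have hT1mem : ∀ t ∈ T1, 0 ≤ t ∧ t ≤ 1 := by
    intro t ht
    rw [hT1] at ht
    obtain ⟨S, _, _, _, hden, htval⟩ := ht
    have := ratio01 P w (fun q => Metric.infDist q (S : Set _) ^ z) hp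
      (fun q hq => mul_nonneg (hw q hq) (Real.rpow_nonneg infDist_nonneg z)) hden
    rw [htval]
    exact this
  have hT2mem : ∀ t ∈ T2, 0 ≤ t ∧ t ≤ 1 := by
    intro t ht
    rw [hT2] at ht
    obtain ⟨S', _, _, hden, htval⟩ := ht
    have := ratio01 P w (fun q => Metric.infDist (lift q r) (S' : Set _) ^ z) hp
      (fun q hq => mul_nonneg (hw q hq) (Real.rpow_nonneg infDist_nonneg z)) hden
    rw [htval]
    exact this
  have hbdd1 : BddAbove T1 := ⟨1, fun t ht => (hT1mem t ht).2⟩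
  have hbdd2 : BddAbove T2 := ⟨1, fun t ht => (hT2mem t ht).2⟩
  rcases Set.eq_empty_or_nonempty T1 with h1e | h1ne
  · -- T1 empty, then T2 empty
    have h2e : T2 = ∅ := by
      rw [← Set.not_nonempty_iff_eq_empty]
      intro h2ne
      obtain ⟨t', ht'⟩ := h2ne
      obtain ⟨t, ht, _⟩ := key21 t' ht'
      rw [h1e] at ht
      simpa using ht
    rw [h1e, h2e, Real.sSup_empty]
    simp
  · have h2ne : T2.Nonempty := by
      obtain ⟨t, ht⟩ := h1ne
      obtain ⟨t', ht', _⟩ := key12 t ht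
      exact ⟨t', ht'⟩
    set A := sSup T1 with hA
    set B := sSup T2 with hB
    have hA0 : 0 ≤ A := by
      obtain ⟨t, ht⟩ := h1ne
      exact le_trans (hT1mem t ht).1 (le_csSup hbdd1 ht)
    have hB0 : 0 ≤ B := by
      obtain ⟨t', ht'⟩ := h2ne
      exact le_trans (hT2mem t' ht').1 (le_csSup hbdd2 ht')
    have hAB : A ≤ H * B := by
      apply csSup_le h1ne
      intro t ht
      obtain ⟨t', ht', hle⟩ := key12 t ht
      calc t ≤ H * t' := hle
        _ ≤ H * B := mul_le_mul_of_nonneg_left (le_csSup hbdd2 ht') hH0.le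
    have hBA : B ≤ H * A := by
      apply csSup_le h2ne
      intro t' ht'
      obtain ⟨t, ht, hle⟩ := key21 t' ht'
      calc t' ≤ H * t := hle
        _ ≤ H * A := mul_le_mul_of_nonneg_left (le_csSup hbdd1 ht) hH0.le
    -- final arithmetic
    rw [abs_sub_le_iff]
    have hHm1 : H - 1 ≤ 2 * ε := by
      rw [hHdef]
      rw [div_sub' h1ε.ne']
      rw [div_le_iff₀ h1ε]
      nlinarith
    have h16 : 2 * ε ≤ 16 * c₁ * ε := by nlinarith
    constructor
    · calc A - B ≤ H * B - B := by linarith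
        _ = (H - 1) * B := by ring
        _ ≤ 2 * ε * B := mul_le_mul_of_nonneg_right hHm1 hB0
        _ ≤ 16 * c₁ * ε * B := by nlinarith
    · have hinv : 1/H = 1 - ε := by
        rw [hHdef]
        field_simp
      have hBH : B / H ≤ A := by
        rw [div_le_iff₀ hH0]
        calc B ≤ H * A := hBA
          _ = A * H := mul_comm H A
      have hBmA : B - A ≤ B - B/H := by linarith
      have hBBH : B - B/H = ε * B := by
        rw [div_eq_mul_inv, ← one_div, hinv]
        ring
      calc B - A ≤ B - B/H := hBmA
        _ = ε * B := hBBH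
        _ ≤ 16 * c₁ * ε * B := by nlinarith
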